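/- (The strong core respects improvement.) Let H = (N, {≻_a}) be a housing market with strict partial order preferences, and let H' be a p-improvement of H for some agent p ∈ N (obtained from H by a sequence of (p,q)-improvements, each of which only raises the position of p in the partial order of some agent q while leaving all comparisons not involving p unchanged). Then for every allocation X in the strong core of H and every allocation X' in the strong core of H', it holds that X' ⪰_p X, i.e., X(p) ≻_p X'(p) does not hold. -/

import Mathlib

/-- A housing market: each agent `a` has a strict partial order `pref a`
(`pref a b c` means agent `a` strictly prefers house `b` to house `c`). -/
structure Market (N : Type) where
  pref : N → N → N → Prop
  irrefl : ∀ a b, ¬ pref a b b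
  asymm : ∀ a b c, pref a b c → ¬ pref a c b
  trans : ∀ a b c d, pref a b c → pref a c d → pref a b d

namespace Market

variable {N : Type}

/-- `b` is acceptable to `a`: `b ⪰_a a`, i.e. not `a ≻_a b`. -/
def acceptable (H : Market N) (a b : N) : Prop := ¬ H.pref a a b

/-- Arcs of the underlying digraph `D^H`. -/
def E (H : Market N) : Set (N × N) := {e | H.acceptable e.1 e.2}

/-- Undominated arcs of `D^H`. -/
def undominated (H : Market N) : Set (N × N) :=
  {e | e ∈ H.E ∧ ∀ b', H.acceptable e.1 b' → ¬ H.pref e.1 b' e.2}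

/-- A full allocation, given as a function assigning each agent its house. -/
def IsAllocation (H : Market N) (X : N → N) : Prop :=
  Function.Bijective X ∧ ∀ a, H.acceptable a (X a)

/-- A cycle of length `k ≥ 1` with all arcs in the arc set `A`. -/
def IsCycleIn (A : Set (N × N)) (k : ℕ) (c : ZMod k → N) : Prop :=
  0 < k ∧ Function.Injective c ∧ ∀ i, (c i, c (i + 1)) ∈ A

/-- `E_{[⪰X]}`: arcs `(a,b)` with `b ⪰_a X(a)`. -/
def weakImprove (H : Market N) (X : N → N) : Set (N × N) :=
  {e | e ∈ H.E ∧ ¬ H.pref e.1 (X e.1) e.2}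

/-- `E_{[≻X]}`: arcs `(a,b)` with `b ≻_a X(a)`. -/
def strictImprove (H : Market N) (X : N → N) : Set (N × N) :=
  {e | e ∈ H.E ∧ H.pref e.1 e.2 (X e.1)}

/-- A (weakly) blocking cycle for `X`. -/
def Blocks (H : Market N) (X : N → N) (k : ℕ) (c : ZMod k → N) : Prop :=
  IsCycleIn H.E k c ∧
  (∀ i, ¬ H.pref (c i) (X (c i)) (c (i + 1))) ∧
  (∃ i, H.pref (c i) (c (i + 1)) (X (c i)))

/-- The strong core: allocations admitting no blocking cycle. -/
def InStrongCore (H : Market N) (X : N → N) : Prop :=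
  H.IsAllocation X ∧ ¬ ∃ k c, H.Blocks X k c

/-- A strictly blocking cycle for `X`. -/
def StrictBlocks (H : Market N) (X : N → N) (k : ℕ) (c : ZMod k → N) : Prop :=
  IsCycleIn H.E k c ∧ ∀ i, H.pref (c i) (c (i + 1)) (X (c i))

/-- The core: allocations admitting no strictly blocking cycle. -/
def InCore (H : Market N) (X : N → N) : Prop :=
  H.IsAllocation X ∧ ¬ ∃ k c, H.StrictBlocks X k c

/-- An allocation of the submarket `H|_S`, given as a set of arcs among agents of `S`. -/
def IsAllocationOn (H : Market N) (S : Set N) (X : Set (N × N)) : Prop :=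
  X ⊆ H.E ∧ (∀ e ∈ X, e.1 ∈ S ∧ e.2 ∈ S) ∧
  (∀ a ∈ S, ∃! b, (a, b) ∈ X) ∧ (∀ b ∈ S, ∃! a, (a, b) ∈ X)

/-- A blocking cycle for the arc set `X` within the submarket `H|_S`. -/
def BlocksOn (H : Market N) (S : Set N) (X : Set (N × N)) (k : ℕ) (c : ZMod k → N) : Prop :=
  IsCycleIn H.E k c ∧ (∀ i, c i ∈ S) ∧
  (∀ i b, (c i, b) ∈ X → ¬ H.pref (c i) b (c (i + 1))) ∧
  (∃ i b, (c i, b) ∈ X ∧ H.pref (c i) (c (i + 1)) b)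

/-- Membership in the strong core of the submarket `H|_S`. -/
def InStrongCoreOn (H : Market N) (S : Set N) (X : Set (N × N)) : Prop :=
  H.IsAllocationOn S X ∧ ¬ ∃ k c, H.BlocksOn S X k c

end Market

/-- The arcs of the allocation `X` whose tails lie in `S`. -/
def graphRestrict {N : Type} (X : N → N) (S : Set N) : Set (N × N) :=
  {e | e.1 ∈ S ∧ e.2 = X e.1}

/-- Reachability in the digraph given by arc set `A`. -/
def reach {N : Type} (A : Set (N × N)) : N → N → Prop :=
  Relation.ReflTransGen (fun u v => (u, v) ∈ A)

/-- A strongly connected component of the digraph given by arc set `A`. -/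
def IsSCC {N : Type} (A : Set (N × N)) (S : Set N) : Prop :=
  S.Nonempty ∧ (∀ u ∈ S, ∀ v ∈ S, reach A u v) ∧
  (∀ u ∈ S, ∀ v, reach A u v → reach A v u → v ∈ S)

/-- An absorbing set: a strongly connected component not left by any arc. -/
def IsAbsorbing {N : Type} (A : Set (N × N)) (S : Set N) : Prop :=
  IsSCC A S ∧ ∀ e ∈ A, e.1 ∈ S → e.2 ∈ S

/-- `H'` is a `(p,q)`-improvement of `H` for some agent `q`. -/
def ImprovementStep {N : Type} (p : N) (H H' : Market N) : Prop :=
  ∃ q, (∀ a, a ≠ q → H.pref a = H'.pref a) ∧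
    (∀ a, a ≠ p → (H.pref q p a → H'.pref q p a) ∧ (H'.pref q a p → H.pref q a p)) ∧
    (∀ a b, a ≠ p → b ≠ p → (H.pref q a b ↔ H'.pref q a b))

namespace SCAux

variable {N : Type}

/-- From reachability, get a path given as a function. -/
lemma reach_fpath {A : Set (N × N)} {b a : N} (h : reach A b a) :
    ∃ n, ∃ v : ℕ → N, v 0 = b ∧ v n = a ∧ ∀ i < n, (v i, v (i+1)) ∈ A := by
  induction h with
  | refl => exact ⟨0, fun _ => b, rfl, rfl, by omega⟩
  | @tail c d hbc harc ih =>
      obtain ⟨n, v, h0, hn, hs⟩ := ih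
      refine ⟨n+1, fun i => if i ≤ n then v i else d, by simp [h0], by simp, ?_⟩
      intro i hi
      by_cases h1 : i < n
      · simpa [Nat.le_of_lt h1, Nat.le_of_lt_succ (by omega : i + 1 < n + 1)] using hs i h1
      · have hin : i = n := by omega
        subst hin
        simpa [hn] using harc

/-- Shortest paths are injective. -/
lemma exists_inj_fpath {A : Set (N × N)} {b a : N} (h : reach A b a) :
    ∃ n, ∃ v : ℕ → N, v 0 = b ∧ v n = a ∧ (∀ i < n, (v i, v (i+1)) ∈ A) ∧
      (∀ i j, i ≤ n → j ≤ n → v i = v j → i = j) := by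
  classical
  obtain ⟨n0, hn0⟩ := reach_fpath h
  have hex : ∃ n, ∃ v : ℕ → N, v 0 = b ∧ v n = a ∧ ∀ i < n, (v i, v (i+1)) ∈ A := ⟨n0, hn0⟩
  obtain ⟨n, hspec, hmin⟩ :
      ∃ n, (∃ v : ℕ → N, v 0 = b ∧ v n = a ∧ ∀ i < n, (v i, v (i+1)) ∈ A) ∧
        ∀ m, m < n → ¬ (∃ v : ℕ → N, v 0 = b ∧ v m = a ∧ ∀ i < m, (v i, v (i+1)) ∈ A) :=
    ⟨Nat.find hex, Nat.find_spec hex, fun m hm => Nat.find_min hex hm⟩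
  obtain ⟨v, h0, hn, harc⟩ := hspec
  refine ⟨n, v, h0, hn, harc, ?_⟩
  by_contra hcon
  push_neg at hcon
  obtain ⟨i0, j0, hi0, hj0, hvij0, hij0⟩ := hcon
  have key : ∀ i j, i ≤ n → j ≤ n → v i = v j → i < j → False := by
    intro i j hi hj hvij hlt
    apply hmin (n - (j - i)) (by omega)
    refine ⟨fun t => if t < i then v t else v (t + (j - i)), ?_, ?_, ?_⟩
    · dsimp only
      by_cases h0i : 0 < i
      · rw [if_pos h0i, h0]
      · rw [if_neg h0i]
        have he : 0 + (j - i) = j := by omega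
        rw [he, ← hvij]
        have hi0' : i = 0 := by omega
        rw [hi0', h0]
    · dsimp only
      rw [if_neg (by omega : ¬ (n - (j - i) < i))]
      have he : n - (j - i) + (j - i) = n := by omega
      rw [he, hn]
    · intro t ht
      dsimp only
      by_cases h1 : t + 1 < i
      · rw [if_pos (by omega), if_pos h1]
        exact harc t (by omega)
      · by_cases h2 : t + 1 = i
        · rw [if_pos (by omega), if_neg (by omega)]
          have he : t + 1 + (j - i) = j := by omega
          rw [he, ← hvij, ← h2]
          exact harc t (by omega)
        · rw [if_neg (by omega), if_neg (by omega)]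
          have he : t + (j - i) + 1 = t + 1 + (j - i) := by omega
          rw [← he]
          exact harc (t + (j - i)) (by omega)
  rcases Nat.lt_or_ge i0 j0 with hlt | hge
  · exact key i0 j0 hi0 hj0 hvij0 hlt
  · exact key j0 i0 hj0 hi0 hvij0.symm (by omega)

/-- Build a blocking cycle from a strict arc whose head reaches its tail in the
weak-improvement digraph. -/
lemma blocks_of_strict_reach (H : Market N) (X : N → N) {a b : N}
    (hW : (a, b) ∈ H.weakImprove X) (hs : H.pref a b (X a))
    (hr : reach (H.weakImprove X) b a) : ∃ k c, H.Blocks X k c := by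
  classical
  obtain ⟨n, v, h0, hn, harc, hinj⟩ := exists_inj_fpath hr
  haveI : NeZero (n + 1) := ⟨Nat.succ_ne_zero n⟩
  set w : ℕ → N := fun i => if i = 0 then a else v (i - 1) with hwdef
  set c : ZMod (n+1) → N := fun i => w i.val with hcdef
  have hvadd : ∀ i : ZMod (n+1), (i + 1).val = (i.val + 1) % (n+1) := by
    intro i
    rw [ZMod.val_add, ZMod.val_one_eq_one_mod, Nat.add_mod_mod]
  have harcW : ∀ i : ZMod (n+1), (c i, c (i + 1)) ∈ H.weakImprove X := by
    intro i
    have hlt : i.val < n + 1 := ZMod.val_lt i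
    show (w i.val, w (i+1).val) ∈ _
    rw [hvadd]
    by_cases hlast : i.val = n
    · rw [hlast]
      have hm0 : (n + 1) % (n + 1) = 0 := Nat.mod_self (n+1)
      rw [hm0]
      by_cases hn0 : n = 0
      · subst hn0
        have hba : b = a := by rw [← h0, hn]
        subst hba
        simpa [hwdef] using hW
      · simp only [hwdef, if_neg hn0, if_pos rfl]
        have h1 := harc (n-1) (by omega)
        have he : n - 1 + 1 = n := by omega
        rw [he, hn] at h1
        exact h1
    · have hiln : i.val < n := by omega
      have hmm : (i.val + 1) % (n+1) = i.val + 1 := Nat.mod_eq_of_lt (by omega)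
      rw [hmm]
      by_cases h0i : i.val = 0
      · rw [h0i]
        simp only [hwdef, if_pos rfl, if_neg (by omega : ¬ (0+1 = 0))]
        simpa [h0] using hW
      · simp only [hwdef, if_neg h0i, if_neg (by omega : ¬ (i.val + 1 = 0))]
        have h1 := harc (i.val - 1) (by omega)
        have he : i.val - 1 + 1 = i.val := by omega
        rw [he] at h1
        simpa using h1
  have hc0 : c 0 = a := by
    show w (0 : ZMod (n+1)).val = a
    rw [ZMod.val_zero]
    simp [hwdef]
  have hc1 : c (0 + 1) = b := by
    show w ((0:ZMod (n+1)) + 1).val = b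
    rw [hvadd, ZMod.val_zero]
    by_cases hn0 : n = 0
    · subst hn0
      have hba : b = a := by rw [← h0, hn]
      subst hba
      simp [hwdef]
    · have hmm : (0 + 1) % (n+1) = 1 := Nat.mod_eq_of_lt (by omega)
      rw [hmm]
      simp only [hwdef, if_neg (by omega : ¬ (1 = 0))]
      simpa using h0
  have hcinj : Function.Injective c := by
    intro i j hij
    apply ZMod.val_injective (n+1)
    have hi : i.val < n + 1 := ZMod.val_lt i
    have hj : j.val < n + 1 := ZMod.val_lt j
    simp only [hcdef, hwdef] at hij
    by_cases h1 : i.val = 0 <;> by_cases h2 : j.val = 0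
    · omega
    · rw [if_pos h1, if_neg h2] at hij
      have hv : v n = v (j.val - 1) := by rw [hn, hij]
      have := hinj n (j.val - 1) (le_refl n) (by omega) hv
      omega
    · rw [if_neg h1, if_pos h2] at hij
      have hv : v (i.val - 1) = v n := by rw [hn, hij]
      have := hinj (i.val - 1) n (by omega) (le_refl n) hv
      omega
    · rw [if_neg h1, if_neg h2] at hij
      have := hinj (i.val - 1) (j.val - 1) (by omega) (by omega) hij
      omega
  refine ⟨n+1, c, ⟨Nat.succ_pos n, hcinj, fun i => (harcW i).1⟩, fun i => (harcW i).2, ?_⟩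
  refine ⟨0, ?_⟩
  rw [hc0, hc1]
  exact hs

lemma no_strict_reach (H : Market N) (X : N → N) (hnb : ¬ ∃ k c, H.Blocks X k c)
    {a b : N} (hE : (a, b) ∈ H.E) (hs : H.pref a b (X a))
    (hr : reach (H.weakImprove X) b a) : False :=
  hnb (blocks_of_strict_reach H X ⟨hE, fun hp => H.asymm _ _ _ hs hp⟩ hs hr)

lemma reach_mono {A B : Set (N × N)} (hAB : A ⊆ B) {u v : N} (h : reach A u v) :
    reach B u v :=
  Relation.ReflTransGen.mono (fun _ _ hx => hAB hx) u v h

lemma orbit_return [Fintype N] {f : N → N} (hf : Function.Injective f) (a : N) :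
    ∃ m, 1 ≤ m ∧ f^[m] a = a := by
  obtain ⟨i, j, hne, heq⟩ := Finite.exists_ne_map_eq_of_infinite (fun n : ℕ => f^[n] a)
  have key : ∀ i j : ℕ, i < j → f^[i] a = f^[j] a → ∃ m, 1 ≤ m ∧ f^[m] a = a := by
    intro i j hlt heq
    refine ⟨j - i, by omega, ?_⟩
    have hj : j = i + (j - i) := by omega
    rw [hj, Function.iterate_add_apply] at heq
    exact (hf.iterate i heq).symm
  rcases hne.lt_or_gt with hlt | hlt
  · exact key i j hlt heq
  · exact key j i hlt heq.symm

/-- Single-step preference transfer facts. -/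
lemma transfer_step {p : N} {H K : Market N} (h : ImprovementStep p H K) :
    (∀ a b c, b ≠ p → c ≠ p → (H.pref a b c ↔ K.pref a b c)) ∧
    (∀ a c, H.pref a p c → K.pref a p c) ∧
    (∀ a c, K.pref a c p → H.pref a c p) := by
  obtain ⟨q, hq1, hq2, hq3⟩ := h
  refine ⟨?_, ?_, ?_⟩
  · intro a b c hb hc
    by_cases ha : a = q
    · subst ha; exact hq3 b c hb hc
    · rw [hq1 a ha]
  · intro a c hac
    by_cases hc : c = p
    · exact absurd (hc ▸ hac) (H.irrefl a p)
    · by_cases ha : a = q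
      · subst ha; exact (hq2 c hc).1 hac
      · rwa [← hq1 a ha]
  · intro a c hac
    by_cases hc : c = p
    · exact absurd (hc ▸ hac) (K.irrefl a p)
    · by_cases ha : a = q
      · subst ha; exact (hq2 c hc).2 hac
      · rwa [hq1 a ha]

/-- Preference transfer along a composition of improvement steps. -/
lemma transfer {p : N} {H H' : Market N}
    (h : Relation.ReflTransGen (ImprovementStep p) H H') :
    (∀ a b c, b ≠ p → c ≠ p → (H.pref a b c ↔ H'.pref a b c)) ∧
    (∀ a c, H.pref a p c → H'.pref a p c) ∧
    (∀ a c, H'.pref a c p → H.pref a c p) := by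
  induction h with
  | refl => exact ⟨fun _ _ _ _ _ => Iff.rfl, fun _ _ h => h, fun _ _ h => h⟩
  | tail hKH hstep ih =>
      obtain ⟨i1, i2, i3⟩ := ih
      obtain ⟨s1, s2, s3⟩ := transfer_step hstep
      exact ⟨fun a b c hb hc => (i1 a b c hb hc).trans (s1 a b c hb hc),
        fun a c hac => s2 a c (i2 a c hac),
        fun a c hac => i3 a c (s3 a c hac)⟩

end SCAux
theorem stmt6 {N : Type} [Fintype N] (H H' : Market N) (p : N)
    (hImp : Relation.ReflTransGen (ImprovementStep p) H H')
    (X X' : N → N) (hX : H.InStrongCore X) (hX' : H'.InStrongCore X') :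
    ¬ H'.pref p (X p) (X' p) := by
  classical
  intro h
  obtain ⟨F1, F2, F3⟩ := SCAux.transfer hImp
  -- the combined weak-improvement digraph
  set A : Set (N × N) := H.weakImprove X ∩ H'.weakImprove X' with hAdef
  have hAW : A ⊆ H.weakImprove X := Set.inter_subset_left
  have hAW' : A ⊆ H'.weakImprove X' := Set.inter_subset_right
  -- acceptability facts
  have haccX : ∀ v, ¬ H.pref v v (X v) := fun v => hX.1.2 v
  have haccX' : ∀ v, ¬ H'.pref v v (X' v) := fun v => hX'.1.2 v
  -- (p, X p) is an arc of H'
  have hEp : ¬ H'.pref p p (X p) := fun hpp => haccX' p (H'.trans p p (X p) (X' p) hpp h)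
  -- preference transfers
  have hP'P : ∀ x y z, y ≠ p → H'.pref x y z → H.pref x y z := by
    intro x y z hy hpr
    by_cases hz : z = p
    · subst hz; exact F3 x y hpr
    · exact (F1 x y z hy hz).2 hpr
  have hPP' : ∀ x y z, z ≠ p → H.pref x y z → H'.pref x y z := by
    intro x y z hz hpr
    by_cases hy : y = p
    · subst hy; exact F2 x z hpr
    · exact (F1 x y z hy hz).1 hpr
  -- arc transfers
  have hE'E : ∀ x y, y ≠ p → ¬ H'.pref x x y → ¬ H.pref x x y := by
    intro x y hy h' hp
    apply h'
    by_cases hx : x = p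
    · rw [hx] at hp ⊢; exact F2 p y hp
    · exact (F1 x x y hx hy).1 hp
  have hEE' : ∀ x y, x ≠ p → ¬ H.pref x x y → ¬ H'.pref x x y := by
    intro x y hx h' hp
    exact h' (hP'P x x y hx hp)
  -- basic arcs
  have hXW : ∀ v, (v, X v) ∈ H.weakImprove X := fun v => ⟨haccX v, H.irrefl v (X v)⟩
  have hYW' : ∀ v, (v, X' v) ∈ H'.weakImprove X' := fun v => ⟨haccX' v, H'.irrefl v (X' v)⟩
  -- closing through p in the market H'
  have hCloseW' : reach (H'.weakImprove X') (X p) p → False := fun hr =>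
    SCAux.no_strict_reach H' X' hX'.2 hEp h hr
  have hClose : ∀ a', reach A (X p) a' → X' a' = p → False := by
    intro a' hra hyp
    apply hCloseW'
    refine (SCAux.reach_mono hAW' hra).tail ?_
    have hx := hYW' a'
    rwa [hyp] at hx
  -- the invariant
  set Inv : N × N → Prop := fun ab =>
    reach A (X p) ab.2 ∧ ab ∈ A ∧
      ((ab.2 = X ab.1 ∧ ab ∈ H'.strictImprove X') ∨
       (ab.2 = X' ab.1 ∧ ab ∈ H.strictImprove X)) with hInvdef
  -- the base point
  have hbase : Inv (p, X p) := by
    refine ⟨Relation.ReflTransGen.refl, ⟨hXW p, ⟨hEp, fun hq => H'.asymm _ _ _ h hq⟩⟩,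
      Or.inl ⟨rfl, ⟨hEp, h⟩⟩⟩
  -- the step
  have hstep : ∀ a b, Inv (a, b) → ∃ a' b', Inv (a', b') ∧ reach A b a' := by
    intro a b hinv
    have hreach : reach A (X p) b := hinv.1
    have hA : (a, b) ∈ A := hinv.2.1
    have htype : (b = X a ∧ (a, b) ∈ H'.strictImprove X') ∨
        (b = X' a ∧ (a, b) ∈ H.strictImprove X) := hinv.2.2
    rcases htype with ⟨hb, hS'⟩ | ⟨hb, hS⟩
    · -- type X : b = X a, (a, X a) strictly improves X' in H'
      subst hb
      obtain ⟨m, hm1, hmret⟩ := SCAux.orbit_return hX.1.1.1 a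
      have hwalk : ∀ i, 1 ≤ i → i ≤ m →
          reach A (X a) (X^[i] a) ∨
          ∃ a', reach A (X a) a' ∧ (a', X a') ∉ H'.weakImprove X' := by
        intro i
        induction i with
        | zero => omega
        | succ i ih =>
          intro _ him
          by_cases hi1 : i = 0
          · subst hi1
            left
            exact Relation.ReflTransGen.refl
          · rcases ih (by omega) (by omega) with hre | hfail
            · by_cases harc : (X^[i] a, X (X^[i] a)) ∈ H'.weakImprove X'
              · left
                rw [Function.iterate_succ_apply']
                exact hre.tail ⟨hXW _, harc⟩
              · right
                exact ⟨X^[i] a, hre, harc⟩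
            · exact Or.inr hfail
      rcases hwalk m hm1 (le_refl m) with hre | ⟨a', hre, hnW'⟩
      · rw [hmret] at hre
        exact absurd (SCAux.reach_mono hAW' hre)
          (fun hr => SCAux.no_strict_reach H' X' hX'.2 hS'.1 hS'.2 hr)
      · have hra' : reach A (X p) a' := hreach.trans hre
        by_cases hE' : ¬ H'.pref a' a' (X a')
        · have hp' : H'.pref a' (X' a') (X a') := by
            by_contra hq
            exact hnW' ⟨hE', hq⟩
          by_cases hyp : X' a' = p
          · exact absurd (hClose a' hra' hyp) (fun hf => hf)
          · have hEa' : ¬ H.pref a' a' (X' a') := hE'E a' (X' a') hyp (haccX' a')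
            have hPa' : H.pref a' (X' a') (X a') := hP'P a' (X' a') (X a') hyp hp'
            exact ⟨a', X' a', ⟨hra'.tail ⟨⟨hEa', fun hq => H.asymm _ _ _ hPa' hq⟩, hYW' a'⟩,
              ⟨⟨hEa', fun hq => H.asymm _ _ _ hPa' hq⟩, hYW' a'⟩,
              Or.inr ⟨rfl, ⟨hEa', hPa'⟩⟩⟩, hre⟩
        · push_neg at hE'
          exfalso
          by_cases hap : a' = p
          · subst hap
            exact hEp hE'
          · exact hEE' a' (X a') hap (haccX a') hE'
    · -- type Y : b = X' a, (a, X' a) strictly improves X in H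
      subst hb
      obtain ⟨m, hm1, hmret⟩ := SCAux.orbit_return hX'.1.1.1 a
      have hwalk : ∀ i, 1 ≤ i → i ≤ m →
          reach A (X' a) (X'^[i] a) ∨
          ∃ a', reach A (X' a) a' ∧ (a', X' a') ∉ H.weakImprove X := by
        intro i
        induction i with
        | zero => omega
        | succ i ih =>
          intro _ him
          by_cases hi1 : i = 0
          · subst hi1
            left
            exact Relation.ReflTransGen.refl
          · rcases ih (by omega) (by omega) with hre | hfail
            · by_cases harc : (X'^[i] a, X' (X'^[i] a)) ∈ H.weakImprove X
              · left
                rw [Function.iterate_succ_apply']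
                exact hre.tail ⟨harc, hYW' _⟩
              · right
                exact ⟨X'^[i] a, hre, harc⟩
            · exact Or.inr hfail
      rcases hwalk m hm1 (le_refl m) with hre | ⟨a', hre, hnW⟩
      · rw [hmret] at hre
        exact absurd (SCAux.reach_mono hAW hre)
          (fun hr => SCAux.no_strict_reach H X hX.2 hS.1 hS.2 hr)
      · have hra' : reach A (X p) a' := hreach.trans hre
        by_cases hyp : X' a' = p
        · exact absurd (hClose a' hra' hyp) (fun hf => hf)
        · have hEa' : ¬ H.pref a' a' (X' a') := hE'E a' (X' a') hyp (haccX' a')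
          have hp2 : H.pref a' (X a') (X' a') := by
            by_contra hq
            exact hnW ⟨hEa', hq⟩
          by_cases hap : a' = p
          · subst hap
            exact absurd (hCloseW' (SCAux.reach_mono hAW' hra')) (fun hf => hf)
          · have hp'' : H'.pref a' (X a') (X' a') := hPP' a' (X a') (X' a') hyp hp2
            have hE'a' : ¬ H'.pref a' a' (X a') := hEE' a' (X a') hap (haccX a')
            exact ⟨a', X a', ⟨hra'.tail ⟨hXW a', ⟨hE'a', fun hq => H'.asymm _ _ _ hp'' hq⟩⟩,
              ⟨hXW a', ⟨hE'a', fun hq => H'.asymm _ _ _ hp'' hq⟩⟩,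
              Or.inl ⟨rfl, ⟨hE'a', hp''⟩⟩⟩, hre⟩
  -- build the infinite sequence
  have hstep' : ∀ t : {ab : N × N // Inv ab}, ∃ t' : {ab : N × N // Inv ab},
      reach A t.1.2 t'.1.1 := by
    rintro ⟨⟨a, b⟩, hab⟩
    obtain ⟨a', b', h1, h2⟩ := hstep a b hab
    exact ⟨⟨(a', b'), h1⟩, h2⟩
  choose nxt hnxt using hstep'
  set seq : ℕ → {ab : N × N // Inv ab} := fun n => nxt^[n] ⟨(p, X p), hbase⟩ with hseqdef
  have hseqs : ∀ n, seq (n+1) = nxt (seq n) := by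
    intro n
    simp only [hseqdef, Function.iterate_succ_apply']
  -- pigeonhole
  obtain ⟨i0, j0, hne, heq⟩ :=
    Finite.exists_ne_map_eq_of_infinite (fun n : ℕ => (seq n).1.1)
  have key : ∀ i j : ℕ, i < j → (seq i).1.1 = (seq j).1.1 → False := by
    intro i j hij heqij
    have hchain : ∀ j', i < j' → reach A (seq i).1.2 (seq j').1.1 := by
      intro j' hj'
      induction j' with
      | zero => omega
      | succ j' ih =>
        by_cases hji : j' = i
        · subst hji
          rw [hseqs j']
          exact hnxt (seq j')
        · have hij' : i < j' := by omega
          have h1 := ih hij'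
          have h2 : ((seq j').1.1, (seq j').1.2) ∈ A := (seq j').2.2.1
          have h3 : reach A (seq j').1.2 (seq (j'+1)).1.1 := by
            rw [hseqs j']
            exact hnxt (seq j')
          exact (h1.tail h2).trans h3
    have hr : reach A (seq i).1.2 (seq i).1.1 := by
      rw [heqij]
      exact hchain j hij
    have htype : ((seq i).1.2 = X (seq i).1.1 ∧ (seq i).1 ∈ H'.strictImprove X') ∨
        ((seq i).1.2 = X' (seq i).1.1 ∧ (seq i).1 ∈ H.strictImprove X) := (seq i).2.2.2
    rcases htype with ⟨hb, hS'⟩ | ⟨hb, hS⟩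
    · exact SCAux.no_strict_reach H' X' hX'.2 hS'.1 hS'.2 (SCAux.reach_mono hAW' hr)
    · exact SCAux.no_strict_reach H X hX.2 hS.1 hS.2 (SCAux.reach_mono hAW hr)
  rcases hne.lt_or_gt with hlt | hlt
  · exact key i0 j0 hlt heq
  · exact key j0 i0 hlt heq.symm
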